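/- Let E be a Banach space whose dual E' has the approximation property. Then for every Banach space F, every compact linear operator T : E → F is a limit in operator norm of finite-rank continuous linear operators. -/

import Mathlib

open Metric Set

/-- A continuous linear operator has finite rank. -/
def FinRank {E F : Type} [NormedAddCommGroup E] [NormedSpace ℝ E]
    [NormedAddCommGroup F] [NormedSpace ℝ F] (T : E →L[ℝ] F) : Prop :=
  FiniteDimensional ℝ (LinearMap.range (T : E →ₗ[ℝ] F))

/-- The approximation property. -/
def HasAP (E : Type) [NormedAddCommGroup E] [NormedSpace ℝ E] : Prop :=
  ∀ K : Set E, IsCompact K → ∀ ε : ℝ, 0 < ε →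
    ∃ S : E →L[ℝ] E, FinRank S ∧ ∀ x ∈ K, ‖S x - x‖ ≤ ε

/-- An operator ideal on the class of (real) Banach spaces. -/
structure OpIdeal where
  mem : ∀ (G E : Type) [NormedAddCommGroup G] [NormedSpace ℝ G] [CompleteSpace G]
      [NormedAddCommGroup E] [NormedSpace ℝ E] [CompleteSpace E], (G →L[ℝ] E) → Prop
  finRank_mem : ∀ (G E : Type) [NormedAddCommGroup G] [NormedSpace ℝ G] [CompleteSpace G]
      [NormedAddCommGroup E] [NormedSpace ℝ E] [CompleteSpace E] (T : G →L[ℝ] E),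
      FinRank T → mem G E T
  comp_left : ∀ (G E F : Type) [NormedAddCommGroup G] [NormedSpace ℝ G] [CompleteSpace G]
      [NormedAddCommGroup E] [NormedSpace ℝ E] [CompleteSpace E]
      [NormedAddCommGroup F] [NormedSpace ℝ F] [CompleteSpace F]
      (T : G →L[ℝ] E) (u : E →L[ℝ] F), mem G E T → mem G F (u.comp T)
  comp_right : ∀ (G E F : Type) [NormedAddCommGroup G] [NormedSpace ℝ G] [CompleteSpace G]
      [NormedAddCommGroup E] [NormedSpace ℝ E] [CompleteSpace E]
      [NormedAddCommGroup F] [NormedSpace ℝ F] [CompleteSpace F]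
      (T : G →L[ℝ] E) (v : F →L[ℝ] G), mem G E T → mem F E (T.comp v)

/-- A set `B` is relatively `I`-compact. -/
def RelICompact (I : OpIdeal) (E : Type) [NormedAddCommGroup E] [NormedSpace ℝ E]
    [CompleteSpace E] (B : Set E) : Prop :=
  ∃ (G : Type) (_ : NormedAddCommGroup G) (_ : NormedSpace ℝ G) (_ : CompleteSpace G)
    (M : Set G) (S : G →L[ℝ] E), IsCompact M ∧ I.mem G E S ∧ B ⊆ S '' M

/-- An `I`-compact operator. -/
def ICompactOp (I : OpIdeal) {E F : Type} [NormedAddCommGroup E] [NormedSpace ℝ E]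
    [CompleteSpace E] [NormedAddCommGroup F] [NormedSpace ℝ F] [CompleteSpace F]
    (T : E →L[ℝ] F) : Prop :=
  RelICompact I F (T '' closedBall (0:E) 1)

/-- An `I`-bounded set. -/
def IBounded (I : OpIdeal) (E : Type) [NormedAddCommGroup E] [NormedSpace ℝ E]
    [CompleteSpace E] (B : Set E) : Prop :=
  ∃ (G : Type) (_ : NormedAddCommGroup G) (_ : NormedSpace ℝ G) (_ : CompleteSpace G)
    (S : G →L[ℝ] E), I.mem G E S ∧ B ⊆ S '' closedBall (0:G) 1

/-- A Lipschitz finite-rank map: image spans a finite-dimensional subspace. -/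
def LipFinRank {X E : Type} [MetricSpace X] [NormedAddCommGroup E] [NormedSpace ℝ E]
    (x₀ : X) (f : X → E) : Prop :=
  (∃ L : NNReal, LipschitzWith L f) ∧ f x₀ = 0 ∧
    FiniteDimensional ℝ (Submodule.span ℝ (Set.range f))

set_option maxHeartbeats 1000000
set_option synthInstance.maxHeartbeats 200000

lemma myOpNorm_le {X Y : Type} [NormedAddCommGroup X] [NormedSpace ℝ X]
    [NormedAddCommGroup Y] [NormedSpace ℝ Y] (g : X →L[ℝ] Y) {c : ℝ} (hc : 0 ≤ c)
    (h : ∀ x : X, ‖x‖ ≤ 1 → ‖g x‖ ≤ c) : ‖g‖ ≤ c := by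
  refine g.opNorm_le_bound hc (fun x => ?_)
  rcases eq_or_ne x 0 with rfl | hx
  · simp [hc]
  · have hxn : 0 < ‖x‖ := norm_pos_iff.mpr hx
    have h1 : ‖(‖x‖⁻¹ • x)‖ ≤ 1 := by
      rw [norm_smul, norm_inv, norm_norm, inv_mul_cancel₀ hxn.ne']
    have := h _ h1
    rw [map_smul, norm_smul, norm_inv, norm_norm] at this
    have h2 : ‖g x‖ = ‖x‖ * (‖x‖⁻¹ * ‖g x‖) := by
      field_simp
    rw [h2]
    calc ‖x‖ * (‖x‖⁻¹ * ‖g x‖) ≤ ‖x‖ * c := mul_le_mul_of_nonneg_left this hxn.le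
      _ = c * ‖x‖ := mul_comm _ _

lemma helly {E : Type} [NormedAddCommGroup E] [NormedSpace ℝ E]
    {ι : Type} [Fintype ι] (φ : (E →L[ℝ] ℝ) →L[ℝ] ℝ) (g : ι → E →L[ℝ] ℝ)
    {δ : ℝ} (hδ : 0 < δ) :
    ∃ x : E, ‖x‖ ≤ ‖φ‖ + δ ∧ ∀ i, ‖g i x - φ (g i)‖ ≤ δ := by
  classical
  set r : ℝ := ‖φ‖ + δ with hrdef
  have hr0 : 0 < r := by rw [hrdef]; positivity
  have hφr : ‖φ‖ < r := by rw [hrdef]; linarith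
  set Λ : E →ₗ[ℝ] (ι → ℝ) := LinearMap.pi (fun i => (g i : E →ₗ[ℝ] ℝ)) with hΛ
  set A : Set (ι → ℝ) := Λ '' closedBall 0 r with hAdef
  set p : ι → ℝ := fun i => φ (g i) with hp
  have hpA : p ∈ closure A := by
    by_contra hpc
    obtain ⟨f, u, hfa, hfp⟩ := geometric_hahn_banach_closed_point
      ((convex_closedBall (0:E) r).linear_image Λ).closure isClosed_closure hpc
    set a : ι → ℝ := fun i => f (Pi.single i 1) with ha
    have key : ∀ y : ι → ℝ, f y = ∑ i, y i * a i := by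
      intro y
      conv_lhs => rw [← Finset.univ_sum_single y]
      rw [map_sum]
      refine Finset.sum_congr rfl (fun i _ => ?_)
      have h1 : Pi.single (M := fun _ : ι => ℝ) i (y i) = y i • Pi.single (M := fun _ : ι => ℝ) i (1:ℝ) := by
        rw [← Pi.single_smul, smul_eq_mul, mul_one]
      rw [h1, map_smul, smul_eq_mul]
    set h : E →L[ℝ] ℝ := ∑ i, a i • g i with hh
    have hhx : ∀ x : E, h x = f (Λ x) := by
      intro x
      rw [key]
      simp only [hh, ContinuousLinearMap.sum_apply, ContinuousLinearMap.coe_smul',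
        Pi.smul_apply, smul_eq_mul, hΛ, LinearMap.pi_apply, ContinuousLinearMap.coe_coe]
      exact Finset.sum_congr rfl (fun i _ => mul_comm _ _)
    have hball : ∀ x ∈ closedBall (0:E) r, h x < u := by
      intro x hx
      rw [hhx]
      exact hfa _ (subset_closure ⟨x, hx, rfl⟩)
    have hu0 : 0 < u := by
      have := hball 0 (mem_closedBall_self hr0.le)
      simpa using this
    have hnorm : ‖h‖ ≤ u / r := by
      refine myOpNorm_le h (by positivity) (fun x hx => ?_)
      have h1 : h (r • x) < u := by
        refine hball _ ?_
        simp only [mem_closedBall, dist_zero_right, norm_smul, Real.norm_eq_abs,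
          abs_of_pos hr0]
        nlinarith [norm_nonneg x]
      have h2 : h (r • (-x)) < u := by
        refine hball _ ?_
        simp only [mem_closedBall, dist_zero_right, norm_smul, Real.norm_eq_abs,
          abs_of_pos hr0, norm_neg]
        nlinarith [norm_nonneg x]
      rw [map_smul, smul_eq_mul] at h1
      rw [map_smul, map_neg, smul_eq_mul] at h2
      rw [Real.norm_eq_abs, abs_le]
      constructor
      · rw [neg_le, le_div_iff₀ hr0]; nlinarith
      · rw [le_div_iff₀ hr0]; nlinarith
    have hfpφ : f p = φ h := by
      rw [key]
      simp only [hh, map_sum, map_smul, smul_eq_mul, hp]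
      exact Finset.sum_congr rfl (fun i _ => mul_comm _ _)
    have hchain : φ h ≤ ‖φ‖ * (u / r) := by
      calc φ h ≤ |φ h| := le_abs_self _
        _ ≤ ‖φ‖ * ‖h‖ := φ.le_opNorm h
        _ ≤ ‖φ‖ * (u / r) := mul_le_mul_of_nonneg_left hnorm (norm_nonneg φ)
    have hlast : ‖φ‖ * (u / r) < r * (u / r) :=
      mul_lt_mul_of_pos_right hφr (by positivity)
    rw [mul_div_cancel₀ _ hr0.ne'] at hlast
    rw [hfpφ] at hfp
    linarith
  obtain ⟨q, hqA, hq⟩ := Metric.mem_closure_iff.mp hpA δ hδ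
  obtain ⟨x, hxball, rfl⟩ := hqA
  refine ⟨x, by simpa [dist_zero_right] using mem_closedBall.mp hxball, fun i => ?_⟩
  have := dist_le_pi_dist p (Λ x) i
  rw [Real.dist_eq] at this
  have h2 : Λ x i = g i x := rfl
  rw [Real.norm_eq_abs, abs_sub_comm, ← h2]
  exact le_trans this hq.le

lemma schauder_tb {E F : Type} [NormedAddCommGroup E] [NormedSpace ℝ E]
    [NormedAddCommGroup F] [NormedSpace ℝ F] (T : E →L[ℝ] F)
    (hT : IsCompact (closure (T '' closedBall (0 : E) 1))) :
    TotallyBounded ((fun f : F →L[ℝ] ℝ => f.comp T) '' closedBall 0 1) := by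
  classical
  rw [Metric.totallyBounded_iff]
  intro δ hδ
  have hδ4 : 0 < δ/4 := by linarith
  obtain ⟨Y, hYsub, hYfin, hYcover⟩ :=
    Metric.finite_approx_of_totallyBounded hT.totallyBounded (δ/4) hδ4
  haveI : Fintype ↥Y := hYfin.fintype
  -- bound on norms of elements of Y
  obtain ⟨R, hR0, hR⟩ : ∃ R : ℝ, 0 ≤ R ∧ ∀ y : ↥Y, ‖(y : F)‖ ≤ R := by
    rcases (hYfin.image fun y => ‖y‖).bddAbove with ⟨R, hR⟩
    exact ⟨max R 0, le_max_right _ _,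
      fun y => le_trans (hR ⟨y, y.2, rfl⟩) (le_max_left _ _)⟩
  set Φ : (F →L[ℝ] ℝ) → (↥Y → ℝ) := fun f => fun y => f (y : F) with hΦ
  set W : Set (↥Y → ℝ) := Φ '' closedBall 0 1 with hW
  have hWtb : TotallyBounded W := by
    refine TotallyBounded.subset ?_ (isCompact_closedBall (0 : ↥Y → ℝ) R).totallyBounded
    rintro - ⟨f, hf, rfl⟩
    rw [mem_closedBall, dist_zero_right]
    refine (pi_norm_le_iff_of_nonneg hR0).mpr (fun y => ?_)
    have hf1 : ‖f‖ ≤ 1 := by simpa [dist_zero_right] using hf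
    calc ‖f (y:F)‖ ≤ ‖f‖ * ‖(y:F)‖ := f.le_opNorm _
      _ ≤ 1 * R := mul_le_mul hf1 (hR y) (norm_nonneg _) zero_le_one
      _ = R := one_mul R
  obtain ⟨P, hPsub, hPfin, hPcover⟩ :=
    Metric.finite_approx_of_totallyBounded hWtb (δ/4) hδ4
  -- choose preimages
  have hsel : ∀ p ∈ P, ∃ f : F →L[ℝ] ℝ, f ∈ closedBall 0 1 ∧ Φ f = p := by
    intro p hp
    obtain ⟨f, hf, hfp⟩ := hPsub hp
    exact ⟨f, hf, hfp⟩
  choose! sel hsel1 hsel2 using hsel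
  refine ⟨(fun p => (sel p).comp T) '' P, hPfin.image _, ?_⟩
  rintro - ⟨f, hf, rfl⟩
  have hf1 : ‖f‖ ≤ 1 := by simpa [dist_zero_right] using hf
  obtain ⟨p, hpP, hpd⟩ : ∃ p ∈ P, Φ f ∈ ball p (δ/4) := by
    have := hPcover ⟨f, hf, rfl⟩
    simpa using this
  have hfp1 : ‖sel p‖ ≤ 1 := by simpa [dist_zero_right] using hsel1 p hpP
  refine mem_iUnion₂.mpr ⟨(sel p).comp T, ⟨p, hpP, rfl⟩, ?_⟩
  rw [mem_ball, dist_eq_norm]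
  have hbound : ‖f.comp T - (sel p).comp T‖ ≤ 3 * (δ/4) := by
    refine myOpNorm_le _ (by linarith) (fun x hx => ?_)
    have hTx : T x ∈ closure (T '' closedBall (0:E) 1) :=
      subset_closure ⟨x, by simpa [dist_zero_right] using hx, rfl⟩
    obtain ⟨y, hyY, hyd⟩ : ∃ y ∈ Y, T x ∈ ball y (δ/4) := by
      have := hYcover hTx; simpa using this
    have h1 : ‖f (T x) - f y‖ ≤ δ/4 := by
      rw [← map_sub]
      calc ‖f (T x - y)‖ ≤ ‖f‖ * ‖T x - y‖ := f.le_opNorm _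
        _ ≤ 1 * (δ/4) := mul_le_mul hf1 (by rw [← dist_eq_norm]; exact (mem_ball.mp hyd).le)
            (norm_nonneg _) zero_le_one
        _ = δ/4 := one_mul _
    have h3 : ‖sel p y - sel p (T x)‖ ≤ δ/4 := by
      rw [← map_sub]
      calc ‖sel p (y - T x)‖ ≤ ‖sel p‖ * ‖y - T x‖ := (sel p).le_opNorm _
        _ ≤ 1 * (δ/4) := mul_le_mul hfp1
            (by rw [norm_sub_rev, ← dist_eq_norm]; exact (mem_ball.mp hyd).le) (norm_nonneg _) zero_le_one
        _ = δ/4 := one_mul _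
    have h2 : ‖f y - sel p y‖ ≤ δ/4 := by
      have hcoord : dist (Φ f ⟨y, hyY⟩) (Φ (sel p) ⟨y, hyY⟩) ≤ dist (Φ f) (Φ (sel p)) :=
        dist_le_pi_dist _ _ _
      rw [Real.dist_eq] at hcoord
      have hlt : dist (Φ f) (Φ (sel p)) ≤ δ/4 := by
        rw [hsel2 p hpP]
        exact (mem_ball.mp hpd).le
      calc ‖f y - sel p y‖ = |Φ f ⟨y, hyY⟩ - Φ (sel p) ⟨y, hyY⟩| := rfl
        _ ≤ dist (Φ f) (Φ (sel p)) := hcoord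
        _ ≤ δ/4 := hlt
    calc ‖(f.comp T - (sel p).comp T) x‖ = ‖f (T x) - sel p (T x)‖ := rfl
      _ = ‖(f (T x) - f y) + (f y - sel p y) + (sel p y - sel p (T x))‖ := by
          congr 1; ring
      _ ≤ ‖f (T x) - f y‖ + ‖f y - sel p y‖ + ‖sel p y - sel p (T x)‖ :=
          norm_add₃_le
      _ ≤ δ/4 + δ/4 + δ/4 := by linarith
      _ = 3 * (δ/4) := by ring
  linarith

theorem stmt4 (E : Type) [NormedAddCommGroup E] [NormedSpace ℝ E] [CompleteSpace E] (hE' : HasAP (E →L[ℝ] ℝ))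
    (F : Type) [NormedAddCommGroup F] [NormedSpace ℝ F] [CompleteSpace F] (T : E →L[ℝ] F)
    (hT : IsCompact (closure (T '' closedBall (0 : E) 1)))
    (ε : ℝ) (hε : 0 < ε) :
    ∃ u : E →L[ℝ] F, FinRank u ∧ ‖T - u‖ ≤ ε := by
  classical
  set A : Set (E →L[ℝ] ℝ) := (fun f : F →L[ℝ] ℝ => f.comp T) '' closedBall 0 1 with hAdef
  set K : Set (E →L[ℝ] ℝ) := closure A with hKdef
  have hK : IsCompact K :=
    TotallyBounded.isCompact_of_isClosed (schauder_tb T hT).closure isClosed_closure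
  have hε2 : 0 < ε/2 := by linarith
  obtain ⟨S, hSfr, hSK⟩ := hE' K hK (ε/2) hε2
  -- abstract finite-rank representation of S
  obtain ⟨n, v, φ, hrep⟩ : ∃ (n : ℕ) (v : Fin n → E →L[ℝ] ℝ)
      (φ : Fin n → ((E →L[ℝ] ℝ) →L[ℝ] ℝ)),
      ∀ g : E →L[ℝ] ℝ, S g = ∑ i, φ i g • v i := by
    haveI hV : FiniteDimensional ℝ
      (LinearMap.range ((S : (E →L[ℝ] ℝ) →ₗ[ℝ] (E →L[ℝ] ℝ)))) := hSfr
    set V := LinearMap.range ((S : (E →L[ℝ] ℝ) →ₗ[ℝ] (E →L[ℝ] ℝ))) with hVdef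
    set b : Module.Basis (Fin (Module.finrank ℝ V)) ℝ V := Module.finBasis ℝ V with hb
    set Sc : (E →L[ℝ] ℝ) →L[ℝ] V :=
      S.codRestrict V (fun g => LinearMap.mem_range_self _ g) with hSc
    refine ⟨Module.finrank ℝ V, fun i => (b i : E →L[ℝ] ℝ),
      fun i => (LinearMap.toContinuousLinearMap (b.coord i)).comp Sc, fun g => ?_⟩
    have h1 : (Sc g : E →L[ℝ] ℝ) = S g := rfl
    rw [← h1, ← b.sum_repr (Sc g)]
    push_cast
    rfl
  clear hSfr
  set M : ℝ := 1 + ∑ i, ‖φ i‖ with hM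
  have hM1 : 1 ≤ M := by
    have : (0:ℝ) ≤ ∑ i, ‖φ i‖ :=
      Finset.sum_nonneg (fun i _ => ContinuousLinearMap.opNorm_nonneg _)
    simp only [hM]; linarith
  have hM0 : 0 < M := by linarith
  have hφM : ∀ i, ‖φ i‖ ≤ M := by
    intro i
    have := Finset.single_le_sum (f := fun i => ‖φ i‖)
      (fun j _ => ContinuousLinearMap.opNorm_nonneg _) (Finset.mem_univ i)
    simp only [hM]; linarith
  set c : ℝ := 1 + ∑ i, ‖v i‖ with hc
  have hc1 : 1 ≤ c := by
    have : (0:ℝ) ≤ ∑ i, ‖v i‖ :=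
      Finset.sum_nonneg (fun i _ => ContinuousLinearMap.opNorm_nonneg _)
    simp only [hc]; linarith
  have hc0 : 0 < c := by linarith
  set δ : ℝ := min 1 (ε/2 / (4*M*c)) with hδdef
  have hδ0 : 0 < δ := lt_min zero_lt_one (by positivity)
  have hδ1 : δ ≤ 1 := min_le_left _ _
  have hδ2 : c * (4*M*δ) ≤ ε/2 := by
    have h1 : δ ≤ ε/2 / (4*M*c) := min_le_right _ _
    have h2 : 0 < 4*M*c := by positivity
    calc c * (4*M*δ) = (4*M*c) * δ := by ring
      _ ≤ (4*M*c) * (ε/2 / (4*M*c)) := mul_le_mul_of_nonneg_left h1 h2.le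
      _ = ε/2 := mul_div_cancel₀ _ h2.ne'
  obtain ⟨t, htsub, htfin, htcover⟩ :=
    Metric.finite_approx_of_totallyBounded hK.totallyBounded δ hδ0
  haveI : Fintype ↥t := htfin.fintype
  have hx : ∀ i, ∃ x : E, ‖x‖ ≤ ‖φ i‖ + δ ∧
      ∀ w : ↥t, ‖(w : E →L[ℝ] ℝ) x - φ i (w : E →L[ℝ] ℝ)‖ ≤ δ :=
    fun i => helly (φ i) (fun w : ↥t => (w : E →L[ℝ] ℝ)) hδ0
  choose x hxnorm hxapp using hx
  have hxM : ∀ i, ‖x i‖ ≤ M + 1 := fun i => (hxnorm i).trans (by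
    have := hφM i; linarith)
  have herr : ∀ i, ∀ g ∈ K, ‖φ i g - g (x i)‖ ≤ 4*M*δ := by
    intro i g hg
    obtain ⟨w, hwt, hwd⟩ : ∃ w ∈ t, g ∈ ball w δ := by
      have := htcover hg; simpa using this
    have hgw : ‖g - w‖ ≤ δ := by
      rw [← dist_eq_norm]; exact (mem_ball.mp hwd).le
    have h1 : ‖φ i g - φ i w‖ ≤ M * δ := by
      rw [← map_sub]
      calc ‖φ i (g - w)‖ ≤ ‖φ i‖ * ‖g - w‖ := (φ i).le_opNorm _
        _ ≤ M * δ := mul_le_mul (hφM i) hgw (norm_nonneg _) hM0.le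
    have h2 : ‖φ i w - w (x i)‖ ≤ δ := by
      have := hxapp i ⟨w, hwt⟩
      rw [norm_sub_rev] at this
      exact this
    have h3 : ‖w (x i) - g (x i)‖ ≤ δ * (M + 1) := by
      have h4 : ‖(w - g) (x i)‖ ≤ ‖w - g‖ * ‖x i‖ := (w - g).le_opNorm _
      calc ‖w (x i) - g (x i)‖ = ‖(w - g) (x i)‖ := rfl
        _ ≤ ‖w - g‖ * ‖x i‖ := h4
        _ ≤ δ * (M + 1) := mul_le_mul (by rw [norm_sub_rev]; exact hgw) (hxM i)
            (norm_nonneg _) hδ0.le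
    have hδM : δ ≤ M * δ := le_mul_of_one_le_left hδ0.le hM1
    calc ‖φ i g - g (x i)‖
        = ‖(φ i g - φ i w) + (φ i w - w (x i)) + (w (x i) - g (x i))‖ := by congr 1; ring
      _ ≤ ‖φ i g - φ i w‖ + ‖φ i w - w (x i)‖ + ‖w (x i) - g (x i)‖ := norm_add₃_le
      _ ≤ M*δ + δ + δ*(M+1) := by linarith
      _ ≤ 4*M*δ := by nlinarith
  obtain ⟨u, hux⟩ : ∃ u : E →L[ℝ] F, ∀ z : E, u z = ∑ i, v i z • T (x i) :=
    ⟨∑ i, (v i).smulRight (T (x i)), fun z => by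
      simp [ContinuousLinearMap.sum_apply]⟩
  refine ⟨u, ?_, ?_⟩
  · -- finite rank
    haveI hfd : FiniteDimensional ℝ
        (Submodule.span ℝ (Set.range (fun i : Fin n => T (x i)))) :=
      FiniteDimensional.span_of_finite ℝ (Set.finite_range _)
    have hle : LinearMap.range ((u : E →ₗ[ℝ] F)) ≤
        Submodule.span ℝ (Set.range (fun i : Fin n => T (x i))) := by
      rintro - ⟨z, rfl⟩
      rw [ContinuousLinearMap.coe_coe, hux]
      exact Submodule.sum_mem _ (fun i _ => Submodule.smul_mem _ _
        (Submodule.subset_span ⟨i, rfl⟩))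
    exact Submodule.finiteDimensional_of_le hle
  · -- norm bound
    refine (T - u).opNorm_le_bound hε.le (fun z => ?_)
    have key1 : ∀ f : F →L[ℝ] ℝ, ‖f‖ ≤ 1 → ‖f ((T - u) z)‖ ≤ ε * ‖z‖ := by
      intro f hf1
      set g : E →L[ℝ] ℝ := f.comp T with hg
      have hgK : g ∈ K := subset_closure ⟨f, by simpa [dist_zero_right] using hf1, rfl⟩
      have hSg : ‖S g - g‖ ≤ ε/2 := hSK g hgK
      have hfu : f (u z) = ∑ i, v i z * g (x i) := by
        rw [hux, map_sum]
        refine Finset.sum_congr rfl (fun i _ => ?_)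
        rw [map_smul, smul_eq_mul]
        rfl
      have hSgz : S g z = ∑ i, φ i g * v i z := by
        rw [hrep g]
        simp [ContinuousLinearMap.sum_apply]
      have hsum : ∑ i, v i z * (φ i g - g (x i)) = S g z - f (u z) := by
        rw [hSgz, hfu, ← Finset.sum_sub_distrib]
        exact Finset.sum_congr rfl (fun i _ => by ring)
      have hexp : f ((T - u) z) =
          (g z - S g z) + ∑ i, v i z * (φ i g - g (x i)) := by
        rw [hsum, ContinuousLinearMap.sub_apply, map_sub]
        have hfT : f (T z) = g z := rfl
        rw [hfT]; ring
      have hb1 : ‖g z - S g z‖ ≤ (ε/2) * ‖z‖ := by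
        have h1 : ‖(g - S g) z‖ ≤ ‖g - S g‖ * ‖z‖ := (g - S g).le_opNorm _
        have h2 : ‖g - S g‖ ≤ ε/2 := by rw [norm_sub_rev]; exact hSg
        calc ‖g z - S g z‖ = ‖(g - S g) z‖ := rfl
          _ ≤ ‖g - S g‖ * ‖z‖ := h1
          _ ≤ (ε/2) * ‖z‖ := mul_le_mul_of_nonneg_right h2 (norm_nonneg _)
      have hb2 : ‖∑ i, v i z * (φ i g - g (x i))‖ ≤ c * (4*M*δ) * ‖z‖ := by
        calc ‖∑ i, v i z * (φ i g - g (x i))‖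
            ≤ ∑ i, ‖v i z * (φ i g - g (x i))‖ := norm_sum_le _ _
          _ ≤ ∑ i, ‖v i‖ * ‖z‖ * (4*M*δ) := by
              refine Finset.sum_le_sum (fun i _ => ?_)
              rw [norm_mul]
              refine mul_le_mul ?_ (herr i g hgK) (norm_nonneg _) ?_
              · exact (v i).le_opNorm z
              · positivity
          _ = (∑ i, ‖v i‖) * (4*M*δ) * ‖z‖ := by
              rw [← Finset.sum_mul, ← Finset.sum_mul]; ring
          _ ≤ c * (4*M*δ) * ‖z‖ := by
              refine mul_le_mul_of_nonneg_right (mul_le_mul_of_nonneg_right ?_ (by positivity))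
                (norm_nonneg _)
              simp only [hc]; linarith
      calc ‖f ((T - u) z)‖
          ≤ ‖g z - S g z‖ + ‖∑ i, v i z * (φ i g - g (x i))‖ := by
            rw [hexp]; exact norm_add_le _ _
        _ ≤ (ε/2) * ‖z‖ + c * (4*M*δ) * ‖z‖ := add_le_add hb1 hb2
        _ ≤ (ε/2) * ‖z‖ + (ε/2) * ‖z‖ :=
            add_le_add le_rfl (mul_le_mul_of_nonneg_right hδ2 (norm_nonneg _))
        _ = ε * ‖z‖ := by ring
    refine NormedSpace.norm_le_dual_bound ℝ ((T - u) z) (by positivity) (fun f => ?_)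
    rcases eq_or_ne f 0 with rfl | hf0
    · simp
    · have hfn : 0 < ‖f‖ := norm_pos_iff.mpr hf0
      have h1 : ‖(‖f‖⁻¹ • f : F →L[ℝ] ℝ)‖ ≤ 1 := by
        rw [norm_smul, norm_inv, norm_norm, inv_mul_cancel₀ hfn.ne']
      have h2 := key1 _ h1
      rw [ContinuousLinearMap.smul_apply, norm_smul, norm_inv, norm_norm] at h2
      calc ‖f ((T - u) z)‖ = ‖f‖ * (‖f‖⁻¹ * ‖f ((T - u) z)‖) := by field_simp
        _ ≤ ‖f‖ * (ε * ‖z‖) := mul_le_mul_of_nonneg_left h2 hfn.le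
        _ = ε * ‖z‖ * ‖f‖ := by ring
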